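/- For every z in the unit sphere S^{2m−1} = {z ∈ ℂ^m : Σ_{k=1}^m |z_k|² = 1} and every 1 ≤ l ≤ m−2: ⟨[Y_l, W_l](z), X(z)⟩ = −2·θ_l·|z_l|²·(Σ_{s=l+1}^m θ_s²|z_s|²)·(Σ_{k=l}^m |z_k|²). -/

import Mathlib

open scoped BigOperators ComplexConjugate

/-- The real inner product on `ℂ^m`: `⟨v,w⟩ = Re ∑_k v_k · conj (w_k)`. -/
noncomputable def rinner {m : ℕ} (v w : Fin m → ℂ) : ℝ :=
  (∑ k : Fin m, v k * conj (w k)).re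

/-- The vector field `X(z) = (iθ₁z₁,…,iθ_m z_m)` generating the flow. -/
noncomputable def sphX {m : ℕ} (θ : Fin m → ℝ) (z : Fin m → ℂ) : Fin m → ℂ :=
  fun k => Complex.I * (θ k : ℂ) * z k

/-- The vector field `Y_l` (here `l` is a 0-based index; the paper's `Y_l` for
`1 ≤ l ≤ m−1` corresponds to indices `l` with `(l:ℕ)+1 < m`): its components are `0` below `l`,
`−(∑_{k>l}|z_k|²)·z_l` at `l`, and `|z_l|²·z_k` above `l`. -/
noncomputable def sphY {m : ℕ} (l : Fin m) (z : Fin m → ℂ) : Fin m → ℂ := fun k =>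
  if (k : ℕ) < (l : ℕ) then 0
  else if k = l then
    -(((∑ j ∈ Finset.univ.filter (fun j : Fin m => (l : ℕ) < (j : ℕ)), ‖z j‖ ^ 2 : ℝ) : ℂ)) * z l
  else ((‖z l‖ ^ 2 : ℝ) : ℂ) * z k

/-- The generic vector field `W_p` (0-based index `p`; the paper's `W_p` for `1 ≤ p ≤ m−2`
corresponds to indices `p` with `(p:ℕ)+2 < m`): components `0` below `p`,
`−(∑_{k>p}θ_k²|z_k|²)·i z_p` at `p`, and `θ_p θ_k |z_p|²·i z_k` above `p`. -/
noncomputable def sphW {m : ℕ} (θ : Fin m → ℝ) (p : Fin m) (z : Fin m → ℂ) : Fin m → ℂ := fun k =>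
  if (k : ℕ) < (p : ℕ) then 0
  else if k = p then
    -(((∑ j ∈ Finset.univ.filter (fun j : Fin m => (p : ℕ) < (j : ℕ)),
        (θ j) ^ 2 * ‖z j‖ ^ 2 : ℝ) : ℂ)) * (Complex.I * z p)
  else (((θ p) * (θ k) * ‖z p‖ ^ 2 : ℝ) : ℂ) * (Complex.I * z k)

/-- The special last vector field `W_{m−1}`, with `a` the index `m−2` and `b` the index `m−1`
(0-based): component `−θ_b|z_b|²·i z_a` at `a`, `θ_a|z_a|²·i z_b` at `b`, and `0` elsewhere. -/
noncomputable def sphWlast {m : ℕ} (θ : Fin m → ℝ) (a b : Fin m) (z : Fin m → ℂ) :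
    Fin m → ℂ := fun k =>
  if k = a then -(((θ b * ‖z b‖ ^ 2 : ℝ)) : ℂ) * (Complex.I * z a)
  else if k = b then (((θ a * ‖z a‖ ^ 2 : ℝ)) : ℂ) * (Complex.I * z b)
  else 0

/-- The full family `W_p`, `1 ≤ p ≤ m−1` (0-based: `(p:ℕ)+1 < m`): the generic `W_p` for
`p ≤ m−2` and the special `W_{m−1}` for the last index. -/
noncomputable def sphWfull {m : ℕ} (hm : 2 ≤ m) (θ : Fin m → ℝ) (p : Fin m) :
    (Fin m → ℂ) → (Fin m → ℂ) :=
  if (p : ℕ) = m - 2 then sphWlast θ ⟨m - 2, by omega⟩ ⟨m - 1, by omega⟩ else sphW θ p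

/-- The Lie bracket `[U,V](z) = (DV)_z(U(z)) − (DU)_z(V(z))` of vector fields on `ℂ^m`,
`D` being the Fréchet derivative over `ℝ`. -/
noncomputable def bracket {m : ℕ} (U V : (Fin m → ℂ) → (Fin m → ℂ)) (z : Fin m → ℂ) :
    Fin m → ℂ :=
  fderiv ℝ V z (U z) - fderiv ℝ U z (V z)

/- ======== auxiliary lemmas ======== -/

noncomputable def stmt13Dsq {m : ℕ} (j : Fin m) (z : Fin m → ℂ) : (Fin m → ℂ) →L[ℝ] ℝ :=
  2 • (innerSL ℝ (z j)).comp (ContinuousLinearMap.proj j)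

lemma stmt13_hasF_sq {m : ℕ} (j : Fin m) (z : Fin m → ℂ) :
    HasFDerivAt (fun z : Fin m → ℂ => ‖z j‖ ^ 2) (stmt13Dsq j z) z :=
  (ContinuousLinearMap.proj j : (Fin m → ℂ) →L[ℝ] ℂ).hasFDerivAt.norm_sq

lemma stmt13Dsq_apply {m : ℕ} (j : Fin m) (z v : Fin m → ℂ) :
    stmt13Dsq j z v = 2 * ((starRingEnd ℂ) (z j) * v j).re := by
  simp [stmt13Dsq, Complex.mul_re]
  ring

lemma stmt13_hasF_shape {m : ℕ} (c : Fin m → ℝ) (F : Finset (Fin m)) (a : ℂ) (k : Fin m)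
    (z : Fin m → ℂ) :
    HasFDerivAt (fun z : Fin m → ℂ => ((∑ j ∈ F, c j * ‖z j‖ ^ 2 : ℝ) : ℂ) * (a * z k))
      ((((∑ j ∈ F, c j * ‖z j‖ ^ 2 : ℝ) : ℂ)) •
          (a • (ContinuousLinearMap.proj k : (Fin m → ℂ) →L[ℝ] ℂ)) +
        (a * z k) • (Complex.ofRealCLM.comp (∑ j ∈ F, c j • stmt13Dsq j z))) z := by
  have hg : HasFDerivAt (fun z : Fin m → ℂ => (∑ j ∈ F, c j * ‖z j‖ ^ 2 : ℝ))
      (∑ j ∈ F, c j • stmt13Dsq j z) z :=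
    HasFDerivAt.fun_sum fun j _ => (stmt13_hasF_sq j z).const_mul (c j)
  have hg' : HasFDerivAt (fun z : Fin m → ℂ => ((∑ j ∈ F, c j * ‖z j‖ ^ 2 : ℝ) : ℂ))
      (Complex.ofRealCLM.comp (∑ j ∈ F, c j • stmt13Dsq j z)) z :=
    Complex.ofRealCLM.hasFDerivAt.comp z hg
  have hh : HasFDerivAt (fun z : Fin m → ℂ => a * z k)
      (a • (ContinuousLinearMap.proj k : (Fin m → ℂ) →L[ℝ] ℂ)) z :=
    (ContinuousLinearMap.proj k : (Fin m → ℂ) →L[ℝ] ℂ).hasFDerivAt.const_mul a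
  exact hg'.mul hh

lemma stmt13_fderiv_shape {m : ℕ} (c : Fin m → ℝ) (F : Finset (Fin m)) (a : ℂ) (k : Fin m)
    (z v : Fin m → ℂ) :
    fderiv ℝ (fun z : Fin m → ℂ => ((∑ j ∈ F, c j * ‖z j‖ ^ 2 : ℝ) : ℂ) * (a * z k)) z v
      = ((∑ j ∈ F, c j * (2 * ((starRingEnd ℂ) (z j) * v j).re) : ℝ) : ℂ) * (a * z k)
        + ((∑ j ∈ F, c j * ‖z j‖ ^ 2 : ℝ) : ℂ) * (a * v k) := by
  rw [(stmt13_hasF_shape c F a k z).fderiv]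
  push_cast
  simp [stmt13Dsq_apply, Finset.mul_sum]
  rw [add_comm]
  congr 1
  rw [Finset.sum_mul]
  exact Finset.sum_congr rfl fun j _ => by ring

lemma stmt13_normsq_eq (w : ℂ) : ‖w‖ ^ 2 = w.re ^ 2 + w.im ^ 2 := by
  rw [Complex.sq_norm, Complex.normSq_apply]; ring

lemma stmt13_re1 (r : ℝ) (w : ℂ) : ((starRingEnd ℂ) w * ((r : ℂ) * w)).re = r * ‖w‖ ^ 2 := by
  rw [stmt13_normsq_eq]; simp [Complex.mul_re, Complex.mul_im]; ring

lemma stmt13_re2 (r : ℝ) (w : ℂ) :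
    ((starRingEnd ℂ) w * ((r : ℂ) * (Complex.I * w))).re = 0 := by
  simp [Complex.mul_re, Complex.mul_im]; ring

lemma stmt13_re3 (r t : ℝ) (w : ℂ) :
    (((r : ℂ) * (Complex.I * w)) * (starRingEnd ℂ) (Complex.I * (t : ℂ) * w)).re
      = r * t * ‖w‖ ^ 2 := by
  rw [stmt13_normsq_eq]; simp [Complex.mul_re, Complex.mul_im]; ring


/-- For `z` on the unit sphere and `1 ≤ l ≤ m−2` (0-based: `(l:ℕ)+2 < m`),
`⟨[Y_l, W_l](z), X(z)⟩ = −2θ_l|z_l|²(∑_{s>l}θ_s²|z_s|²)(∑_{k≥l}|z_k|²)`. -/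
theorem stmt13 {m : ℕ} (hm : 2 ≤ m) (θ : Fin m → ℝ) (hθ1 : θ ⟨0, by omega⟩ = 1)
    (hmono : Monotone θ) (z : Fin m → ℂ) (hz : ∑ k : Fin m, ‖z k‖ ^ 2 = 1)
    (l : Fin m) (hl : (l : ℕ) + 2 < m) :
    rinner (bracket (sphY l) (sphW θ l) z) (sphX θ z)
      = -2 * θ l * ‖z l‖ ^ 2
          * (∑ s ∈ Finset.univ.filter (fun s : Fin m => (l : ℕ) < (s : ℕ)),
              (θ s) ^ 2 * ‖z s‖ ^ 2)
          * (∑ k ∈ Finset.univ.filter (fun k : Fin m => (l : ℕ) ≤ (k : ℕ)), ‖z k‖ ^ 2) := by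
  classical
  set F : Finset (Fin m) := Finset.univ.filter (fun j : Fin m => (l : ℕ) < (j : ℕ)) with hF
  have hmemF : ∀ j : Fin m, j ∈ F ↔ (l : ℕ) < (j : ℕ) := by
    intro j; simp [hF]
  have hknel : ∀ k : Fin m, (l : ℕ) < (k : ℕ) → k ≠ l := by
    intro k hk h; subst h; omega
  have hknlt : ∀ k : Fin m, (l : ℕ) < (k : ℕ) → ¬((k : ℕ) < (l : ℕ)) := by
    intro k hk; omega
  -- component function rewrites
  have hY0 : ∀ k : Fin m, (k : ℕ) < (l : ℕ) →
      (fun z : Fin m → ℂ => sphY l z k) = fun _ => (0 : ℂ) := by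
    intro k hk; funext z'; simp [sphY, hk]
  have hW0 : ∀ k : Fin m, (k : ℕ) < (l : ℕ) →
      (fun z : Fin m → ℂ => sphW θ l z k) = fun _ => (0 : ℂ) := by
    intro k hk; funext z'; simp [sphW, hk]
  have hYl : (fun z : Fin m → ℂ => sphY l z l)
      = fun z : Fin m → ℂ => ((∑ j ∈ F, (-1 : ℝ) * ‖z j‖ ^ 2 : ℝ) : ℂ) * ((1 : ℂ) * z l) := by
    funext z'
    simp [sphY, hF, neg_one_mul, Finset.sum_neg_distrib]
  have hWl : (fun z : Fin m → ℂ => sphW θ l z l)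
      = fun z : Fin m → ℂ =>
        ((∑ j ∈ F, (-(θ j ^ 2)) * ‖z j‖ ^ 2 : ℝ) : ℂ) * (Complex.I * z l) := by
    funext z'
    simp [sphW, hF, neg_mul, Finset.sum_neg_distrib]
  have hYk : ∀ k : Fin m, (l : ℕ) < (k : ℕ) → (fun z : Fin m → ℂ => sphY l z k)
      = fun z : Fin m → ℂ =>
        ((∑ j ∈ ({l} : Finset (Fin m)), (1 : ℝ) * ‖z j‖ ^ 2 : ℝ) : ℂ) * ((1 : ℂ) * z k) := by
    intro k hk; funext z'; simp [sphY, hknlt k hk, hknel k hk]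
  have hWk : ∀ k : Fin m, (l : ℕ) < (k : ℕ) → (fun z : Fin m → ℂ => sphW θ l z k)
      = fun z : Fin m → ℂ =>
        ((∑ j ∈ ({l} : Finset (Fin m)), (θ l * θ k) * ‖z j‖ ^ 2 : ℝ) : ℂ)
          * (Complex.I * z k) := by
    intro k hk; funext z'; simp [sphW, hknlt k hk, hknel k hk]
  -- values
  have hYvl : sphY l z l = ((-(∑ j ∈ F, ‖z j‖ ^ 2) : ℝ) : ℂ) * z l := by
    simp [sphY, hF]
  have hWvl : sphW θ l z l
      = ((-(∑ j ∈ F, θ j ^ 2 * ‖z j‖ ^ 2) : ℝ) : ℂ) * (Complex.I * z l) := by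
    simp [sphW, hF]
  have hYvk : ∀ j : Fin m, (l : ℕ) < (j : ℕ) →
      sphY l z j = ((‖z l‖ ^ 2 : ℝ) : ℂ) * z j := by
    intro j hj; simp [sphY, hknlt j hj, hknel j hj]
  have hWvk : ∀ j : Fin m, (l : ℕ) < (j : ℕ) →
      sphW θ l z j = ((θ l * θ j * ‖z l‖ ^ 2 : ℝ) : ℂ) * (Complex.I * z j) := by
    intro j hj; simp [sphW, hknlt j hj, hknel j hj]
  -- differentiability
  have hdY : ∀ k : Fin m, DifferentiableAt ℝ (fun z : Fin m → ℂ => sphY l z k) z := by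
    intro k
    rcases lt_trichotomy (k : ℕ) (l : ℕ) with h | h | h
    · rw [hY0 k h]; exact differentiableAt_const _
    · have hkl : k = l := Fin.ext h
      subst hkl; rw [hYl]; exact (stmt13_hasF_shape _ _ _ _ z).differentiableAt
    · rw [hYk k h]; exact (stmt13_hasF_shape _ _ _ _ z).differentiableAt
  have hdW : ∀ k : Fin m, DifferentiableAt ℝ (fun z : Fin m → ℂ => sphW θ l z k) z := by
    intro k
    rcases lt_trichotomy (k : ℕ) (l : ℕ) with h | h | h
    · rw [hW0 k h]; exact differentiableAt_const _
    · have hkl : k = l := Fin.ext h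
      subst hkl; rw [hWl]; exact (stmt13_hasF_shape _ _ _ _ z).differentiableAt
    · rw [hWk k h]; exact (stmt13_hasF_shape _ _ _ _ z).differentiableAt
  have hfY : fderiv ℝ (sphY l) z
      = ContinuousLinearMap.pi (fun k => fderiv ℝ (fun z : Fin m → ℂ => sphY l z k) z) :=
    fderiv_pi hdY
  have hfW : fderiv ℝ (sphW θ l) z
      = ContinuousLinearMap.pi (fun k => fderiv ℝ (fun z : Fin m → ℂ => sphW θ l z k) z) :=
    fderiv_pi hdW
  have hbr : ∀ k : Fin m, bracket (sphY l) (sphW θ l) z k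
      = fderiv ℝ (fun z : Fin m → ℂ => sphW θ l z k) z (sphY l z)
        - fderiv ℝ (fun z : Fin m → ℂ => sphY l z k) z (sphW θ l z) := by
    intro k
    simp only [bracket, Pi.sub_apply, hfY, hfW, ContinuousLinearMap.pi_apply]
  -- bracket components
  have hB0 : ∀ k : Fin m, (k : ℕ) < (l : ℕ) → bracket (sphY l) (sphW θ l) z k = 0 := by
    intro k hk
    rw [hbr k, hY0 k hk, hW0 k hk]
    simp
  have hBl : bracket (sphY l) (sphW θ l) z l
      = ((-2 * ‖z l‖ ^ 2 * (∑ j ∈ F, θ j ^ 2 * ‖z j‖ ^ 2) : ℝ) : ℂ) * (Complex.I * z l) := by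
    rw [hbr l, hWl, hYl, stmt13_fderiv_shape, stmt13_fderiv_shape]
    have e1 : (∑ j ∈ F, (-(θ j ^ 2)) * (2 * ((starRingEnd ℂ) (z j) * sphY l z j).re))
        = -2 * ‖z l‖ ^ 2 * (∑ j ∈ F, θ j ^ 2 * ‖z j‖ ^ 2) := by
      rw [Finset.mul_sum]
      refine Finset.sum_congr rfl fun j hj => ?_
      rw [hYvk j ((hmemF j).1 hj), stmt13_re1]; ring
    have e2 : (∑ j ∈ F, (-1 : ℝ) * (2 * ((starRingEnd ℂ) (z j) * sphW θ l z j).re)) = 0 := by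
      refine Finset.sum_eq_zero fun j hj => ?_
      rw [hWvk j ((hmemF j).1 hj), stmt13_re2]; ring
    rw [e1, e2, hYvl, hWvl]
    have e3 : (∑ j ∈ F, (-(θ j ^ 2)) * ‖z j‖ ^ 2) = -(∑ j ∈ F, θ j ^ 2 * ‖z j‖ ^ 2) := by
      simp [neg_mul, Finset.sum_neg_distrib]
    have e4 : (∑ j ∈ F, (-1 : ℝ) * ‖z j‖ ^ 2) = -(∑ j ∈ F, ‖z j‖ ^ 2) := by
      simp [neg_one_mul, Finset.sum_neg_distrib]
    rw [e3, e4]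
    push_cast
    ring
  have hBk : ∀ k : Fin m, (l : ℕ) < (k : ℕ) → bracket (sphY l) (sphW θ l) z k
      = ((-2 * θ l * θ k * ‖z l‖ ^ 2 * (∑ j ∈ F, ‖z j‖ ^ 2) : ℝ) : ℂ)
          * (Complex.I * z k) := by
    intro k hk
    rw [hbr k, hWk k hk, hYk k hk, stmt13_fderiv_shape, stmt13_fderiv_shape,
      Finset.sum_singleton, Finset.sum_singleton, Finset.sum_singleton,
      Finset.sum_singleton, hYvl, hWvl, hYvk k hk, hWvk k hk, stmt13_re1, stmt13_re2]
    push_cast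
    ring
  -- assemble
  have hre : rinner (bracket (sphY l) (sphW θ l) z) (sphX θ z)
      = ∑ k : Fin m,
          ((bracket (sphY l) (sphW θ l) z k) * (starRingEnd ℂ) (sphX θ z k)).re := by
    simp [rinner, Complex.re_sum]
  rw [hre]
  have hsplit : (Finset.univ : Finset (Fin m))
      = (Finset.univ.filter (fun k : Fin m => (l : ℕ) ≤ (k : ℕ)))
        ∪ (Finset.univ.filter (fun k : Fin m => (k : ℕ) < (l : ℕ))) := by
    ext k; simp; omega
  have hdisj : Disjoint (Finset.univ.filter (fun k : Fin m => (l : ℕ) ≤ (k : ℕ)))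
      (Finset.univ.filter (fun k : Fin m => (k : ℕ) < (l : ℕ))) := by
    rw [Finset.disjoint_filter]
    intro k _ h1; omega
  have hins : (Finset.univ.filter (fun k : Fin m => (l : ℕ) ≤ (k : ℕ))) = insert l F := by
    ext k
    simp [hF]
    omega
  have hlF : l ∉ F := by simp [hF]
  have hRHS : ∑ k ∈ Finset.univ.filter (fun k : Fin m => (l : ℕ) ≤ (k : ℕ)), ‖z k‖ ^ 2
      = ‖z l‖ ^ 2 + ∑ j ∈ F, ‖z j‖ ^ 2 := by
    rw [hins, Finset.sum_insert hlF]
  rw [hRHS, hsplit, Finset.sum_union hdisj]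
  have h0part : ∑ k ∈ Finset.univ.filter (fun k : Fin m => (k : ℕ) < (l : ℕ)),
      ((bracket (sphY l) (sphW θ l) z k) * (starRingEnd ℂ) (sphX θ z k)).re = 0 := by
    refine Finset.sum_eq_zero fun k hk => ?_
    rw [hB0 k (by simpa using hk)]
    simp
  rw [h0part, add_zero, hins, Finset.sum_insert hlF]
  have hterm_l : ((bracket (sphY l) (sphW θ l) z l) * (starRingEnd ℂ) (sphX θ z l)).re
      = (-2 * ‖z l‖ ^ 2 * (∑ j ∈ F, θ j ^ 2 * ‖z j‖ ^ 2)) * θ l * ‖z l‖ ^ 2 := by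
    rw [hBl]
    exact stmt13_re3 _ _ _
  have hterm_k : ∀ k ∈ F,
      ((bracket (sphY l) (sphW θ l) z k) * (starRingEnd ℂ) (sphX θ z k)).re
        = (-2 * θ l * θ k * ‖z l‖ ^ 2 * (∑ j ∈ F, ‖z j‖ ^ 2)) * θ k * ‖z k‖ ^ 2 := by
    intro k hk
    rw [hBk k ((hmemF k).1 hk)]
    exact stmt13_re3 _ _ _
  rw [hterm_l, Finset.sum_congr rfl hterm_k]
  have hsum : ∑ k ∈ F, (-2 * θ l * θ k * ‖z l‖ ^ 2 * (∑ j ∈ F, ‖z j‖ ^ 2)) * θ k * ‖z k‖ ^ 2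
      = (-2 * θ l * ‖z l‖ ^ 2 * (∑ j ∈ F, ‖z j‖ ^ 2)) * (∑ j ∈ F, θ j ^ 2 * ‖z j‖ ^ 2) := by
    rw [Finset.mul_sum]
    exact Finset.sum_congr rfl fun j _ => by ring
  rw [hsum]
  ring
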